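/- Let n ≥ 1 and s ∈ (0,1), and let B_r denote the open ball of radius r centered at the origin in ℝⁿ. Let v : ℝⁿ → ℝ be measurable with ∫_{ℝⁿ}|v(y)|/(1+|y|^{n+2s}) dy < ∞, and suppose there exists x* ∈ B_{1/2} such that v(y) ≤ v(x*) for almost every y ∈ ℝⁿ, v(x*) ≥ 1, and v = 0 almost everywhere on B₃∖B₂. Then the integral ∫_{ℝⁿ}(v(y) − v(x*)) |y − x*|^{−(n+2s)} dy (well defined in [−∞, 0] since the integrand is nonpositive a.e.) satisfies ∫_{ℝⁿ}(v(y) − v(x*)) |y − x*|^{−(n+2s)} dy ≤ ∫_{B₃∖B₂}(v(y) − v(x*)) |y − x*|^{−(n+2s)} dy < 0. -/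
import Mathlib


open MeasureTheory Metric Set Filter RealInnerProductSpace

noncomputable section

/-- Euclidean space ℝⁿ. -/
abbrev Eu (n : ℕ) := EuclideanSpace ℝ (Fin n)

/-- A kernel `μ` in the class `𝓛_*`: measurable, with values in `[λ, Λ]` on the unit
sphere, and even. -/
def IsAdmissibleKernel (n : ℕ) (lam Lam : ℝ) (μ : Eu n → ℝ) : Prop :=
  Measurable μ ∧ (∀ θ : Eu n, ‖θ‖ = 1 → μ θ ∈ Set.Icc lam Lam) ∧ ∀ θ : Eu n, μ (-θ) = μ θ

/-- The integrand `(u(x+y) + u(x−y) − 2u(x)) μ(y/|y|) |y|^{−(n+2s)}`. -/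
def kernIntegrand (n : ℕ) (s : ℝ) (μ u : Eu n → ℝ) (x y : Eu n) : ℝ :=
  (u (x + y) + u (x - y) - 2 * u x) * μ (‖y‖⁻¹ • y) / ‖y‖ ^ ((n : ℝ) + 2 * s)

/-- The linear nonlocal operator `L_μ u(x)`. -/
def Lop (n : ℕ) (s : ℝ) (μ u : Eu n → ℝ) (x : Eu n) : ℝ :=
  (1 - s) * ∫ y, kernIntegrand n s μ u x y

/-- The Pucci extremal operator `𝓜⁺`. -/
def PucciSup (n : ℕ) (s lam Lam : ℝ) (u : Eu n → ℝ) (x : Eu n) : ℝ :=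
  ⨆ μ : {μ : Eu n → ℝ // IsAdmissibleKernel n lam Lam μ}, Lop n s μ.1 u x

/-- The Pucci extremal operator `𝓜⁻`. -/
def PucciInf (n : ℕ) (s lam Lam : ℝ) (u : Eu n → ℝ) (x : Eu n) : ℝ :=
  ⨅ μ : {μ : Eu n → ℝ // IsAdmissibleKernel n lam Lam μ}, Lop n s μ.1 u x

/-- Membership in `L¹_s(ℝⁿ)`. -/
def MemL1s (n : ℕ) (s : ℝ) (u : Eu n → ℝ) : Prop :=
  Integrable (fun x : Eu n => |u x| / (1 + ‖x‖ ^ ((n : ℝ) + 2 * s)))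

/-- The weighted norm `‖u‖_{L¹_s(ℝⁿ)}`. -/
def L1sNorm (n : ℕ) (s : ℝ) (u : Eu n → ℝ) : ℝ :=
  ∫ x : Eu n, |u x| / (1 + ‖x‖ ^ ((n : ℝ) + 2 * s))

/-- Viscosity supersolution `𝓜⁻[u] ≤ g` in `Ω` (the function `g` may incorporate
zeroth-order terms evaluated at `(x, u(x))`): every `C²` test function in `L¹_s`
touching `u` from below at a point of `Ω` satisfies `𝓜⁻[φ](x) ≤ g(x)`. -/
def ViscSupersol (n : ℕ) (s lam Lam : ℝ) (Ω : Set (Eu n)) (u g : Eu n → ℝ) : Prop :=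
  ∀ x ∈ Ω, ∀ φ : Eu n → ℝ, MemL1s n s φ → ContDiffAt ℝ 2 φ x →
    φ x = u x → (∀ y, φ y ≤ u y) → PucciInf n s lam Lam φ x ≤ g x

/-- Viscosity subsolution `𝓜⁻[u] ≥ g` in `Ω`. -/
def ViscSubsol (n : ℕ) (s lam Lam : ℝ) (Ω : Set (Eu n)) (u g : Eu n → ℝ) : Prop :=
  ∀ x ∈ Ω, ∀ φ : Eu n → ℝ, MemL1s n s φ → ContDiffAt ℝ 2 φ x →
    φ x = u x → (∀ y, u y ≤ φ y) → g x ≤ PucciInf n s lam Lam φ x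

/-- The key estimate for the counterexample to the SMP: if `v ∈ L¹_s` attains its
(a.e.) maximum value `v(x*) ≥ 1` at `x* ∈ B_{1/2}` and vanishes a.e. on `B₃∖B₂`, then
`∫ (v − v(x*))|y − x*|^{−(n+2s)} dy ≤ ∫_{B₃∖B₂} (v − v(x*))|y − x*|^{−(n+2s)} dy < 0`.
Since the integrand is nonpositive a.e., this is expressed equivalently through the
nonnegative integrand `v(x*) − v`: the integral over `ℝⁿ` dominates the one over the
annulus, which is strictly positive. -/
theorem stmt19 (n : ℕ) (hn : 1 ≤ n) (s : ℝ) (hs : s ∈ Set.Ioo (0:ℝ) 1)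
    (v : Eu n → ℝ) (hvmeas : Measurable v)
    (hvL1 : MemL1s n s v)
    (xs : Eu n) (hxs : xs ∈ Metric.ball (0 : Eu n) (1/2))
    (hmax : ∀ᵐ y : Eu n, v y ≤ v xs) (hone : 1 ≤ v xs)
    (hzero : ∀ᵐ y : Eu n, y ∈ Metric.ball (0 : Eu n) 3 \ Metric.ball (0 : Eu n) 2 → v y = 0) :
    (∫⁻ y in Metric.ball (0 : Eu n) 3 \ Metric.ball (0 : Eu n) 2,
        ENNReal.ofReal ((v xs - v y) / ‖y - xs‖ ^ ((n : ℝ) + 2 * s)) ≤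
      ∫⁻ y : Eu n, ENNReal.ofReal ((v xs - v y) / ‖y - xs‖ ^ ((n : ℝ) + 2 * s))) ∧
    0 < ∫⁻ y in Metric.ball (0 : Eu n) 3 \ Metric.ball (0 : Eu n) 2,
        ENNReal.ofReal ((v xs - v y) / ‖y - xs‖ ^ ((n : ℝ) + 2 * s)) := by
  have hs0 : 0 < s := hs.1
  set e : ℝ := (n : ℝ) + 2 * s with he_def
  have he : 0 < e := by positivity
  set A : Set (Eu n) := Metric.ball (0 : Eu n) 3 \ Metric.ball (0 : Eu n) 2 with hA_def
  have hAmeas : MeasurableSet A := measurableSet_ball.diff measurableSet_ball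
  refine ⟨MeasureTheory.setLIntegral_le_lintegral _ _, ?_⟩
  -- a point in the annulus
  have hxs' : ‖xs‖ < 1/2 := by simpa using mem_ball_zero_iff.1 hxs
  set i : Fin n := ⟨0, hn⟩
  set p : Eu n := (5/2 : ℝ) • (EuclideanSpace.single i (1:ℝ))
  have hpnorm : ‖p‖ = 5/2 := by
    rw [norm_smul, EuclideanSpace.norm_single]
    norm_num
  have hsub : Metric.ball p (1/4) ⊆ A := by
    intro y hy
    have hy' : ‖y - p‖ < 1/4 := by simpa [dist_eq_norm] using hy
    constructor
    · rw [mem_ball_zero_iff]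
      calc ‖y‖ = ‖(y - p) + p‖ := by rw [sub_add_cancel]
        _ ≤ ‖y - p‖ + ‖p‖ := norm_add_le _ _
        _ < 3 := by rw [hpnorm]; linarith
    · intro hy2
      have : ‖y‖ < 2 := mem_ball_zero_iff.1 hy2
      have h1 : ‖p‖ - ‖y‖ ≤ ‖y - p‖ := by
        have := norm_sub_norm_le (y - p) y
        simp only [sub_sub_cancel_left, norm_neg] at this
        linarith [norm_sub_norm_le y p, abs_le.1 (abs_norm_sub_norm_le y p)]
      rw [hpnorm] at h1; linarith
  have hApos : 0 < volume A :=
    lt_of_lt_of_le (Metric.measure_ball_pos volume p (by norm_num)) (measure_mono hsub)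
  set c : ℝ := 1 / (7/2 : ℝ) ^ e with hc_def
  have hcpos : 0 < c := by
    have : (0:ℝ) < (7/2 : ℝ) ^ e := Real.rpow_pos_of_pos (by norm_num) e
    positivity
  have hbound : ∀ᵐ y ∂(volume.restrict A),
      ENNReal.ofReal c ≤ ENNReal.ofReal ((v xs - v y) / ‖y - xs‖ ^ e) := by
    have h0 : ∀ᵐ y ∂(volume.restrict A), y ∈ A → v y = 0 := ae_restrict_of_ae hzero
    have hm : ∀ᵐ y ∂(volume.restrict A), y ∈ A := ae_restrict_mem hAmeas
    filter_upwards [h0, hm] with y h0y hy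
    have hv0 : v y = 0 := h0y hy
    have hy3 : ‖y‖ < 3 := mem_ball_zero_iff.1 hy.1
    have hy2 : 2 ≤ ‖y‖ := by
      by_contra h
      exact hy.2 (mem_ball_zero_iff.2 (by linarith))
    have hd1 : ‖y - xs‖ < 7/2 := by
      calc ‖y - xs‖ ≤ ‖y‖ + ‖xs‖ := norm_sub_le _ _
        _ < 7/2 := by linarith
    have hd2 : (3/2 : ℝ) ≤ ‖y - xs‖ := by
      have := norm_sub_norm_le y xs
      have h := abs_le.1 (abs_norm_sub_norm_le y xs)
      linarith [h.1]
    have hdpos : (0:ℝ) < ‖y - xs‖ ^ e := Real.rpow_pos_of_pos (by linarith) e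
    have hdle : ‖y - xs‖ ^ e ≤ (7/2 : ℝ) ^ e :=
      Real.rpow_le_rpow (norm_nonneg _) hd1.le he.le
    apply ENNReal.ofReal_le_ofReal
    rw [hv0, sub_zero]
    calc c = 1 / (7/2 : ℝ) ^ e := rfl
      _ ≤ v xs / ‖y - xs‖ ^ e :=
        div_le_div₀ (le_trans zero_le_one hone) hone hdpos hdle
  have hkey : ENNReal.ofReal c * volume A ≤
      ∫⁻ y in A, ENNReal.ofReal ((v xs - v y) / ‖y - xs‖ ^ e) := by
    rw [← MeasureTheory.setLIntegral_const]
    exact lintegral_mono_ae hbound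
  refine lt_of_lt_of_le ?_ hkey
  exact ENNReal.mul_pos (by simp [ENNReal.ofReal_pos.2 hcpos, ne_of_gt]) hApos.ne'
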